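/- For every upcycle u for A^n, the graph S(u) contains a Hamilton cycle. -/

import Mathlib

/-- The window of length `n` of the cyclic partial word `u` starting at position `i`
covers the total word `w`. -/
def Covers (a n : ℕ) (u : ℕ → Option (Fin a)) (i : ℕ) (w : Fin n → Fin a) : Prop :=
  ∀ j : Fin n, u (i + (j : ℕ)) = none ∨ u (i + (j : ℕ)) = some (w j)

/-- `u`, viewed as a cyclic partial word of length `N`, is a universal partial cycle
for `(Fin a)^n`. -/
def IsUpcycle (a n N : ℕ) (u : ℕ → Option (Fin a)) : Prop :=
  (∀ i, u (i + N) = u i) ∧ ∀ w : Fin n → Fin a, ∃! i : Fin N, Covers a n u (i : ℕ) w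

/-- `x → y` is an edge of the De Bruijn graph `B(a, n)`. -/
def DBEdge (a n : ℕ) (x y : Fin n → Fin a) : Prop :=
  ∀ (i : ℕ) (h : i + 1 < n), y ⟨i, by omega⟩ = x ⟨i + 1, h⟩

/-- `x → y` is an edge of the spanning subgraph `S(u)` of the De Bruijn graph `B(a,n)`:
it is a De Bruijn edge and `x`, `y` are covered by consecutive windows of `u`. -/
def SEdge (a n : ℕ) (u : ℕ → Option (Fin a)) (x y : Fin n → Fin a) : Prop :=
  DBEdge a n x y ∧ ∃ i : ℕ, Covers a n u i x ∧ Covers a n u (i + 1) y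

section UpcycleAux

open List Finset

section Euler

variable {E V : Type} [DecidableEq E] [DecidableEq V] (s t : E → V)

/-- Edge `f` can follow edge `e`. -/
def ERel (e f : E) : Prop := t e = s f

lemma chain_count (z : V) : ∀ (l : List E), l.Chain' (ERel s t) →
    ∀ x y, l.head? = some x → l.getLast? = some y →
    l.countP (fun e => decide (t e = z)) + (if s x = z then 1 else 0)
      = l.countP (fun e => decide (s e = z)) + (if t y = z then 1 else 0) := by
  intro l
  induction l with
  | nil => intro _ x y hx; simp at hx
  | cons e r ih =>
    intro hc x y hx hy
    cases r with
    | nil =>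
      simp only [List.head?_cons, Option.some_inj] at hx
      simp only [List.getLast?_singleton, Option.some_inj] at hy
      subst hx; subst hy
      simp only [List.countP_cons, List.countP_nil, decide_eq_true_eq]
      omega
    | cons e' r' =>
      have hrel : t e = s e' := (List.isChain_cons_cons.1 hc).1
      have hc' : (e' :: r').Chain' (ERel s t) := (List.isChain_cons_cons.1 hc).2
      simp only [List.head?_cons, Option.some_inj] at hx
      subst hx
      rw [List.getLast?_cons_cons] at hy
      have IH := ih hc' e' y rfl hy
      simp only [List.countP_cons, decide_eq_true_eq] at *
      have hite : (if t e = z then 1 else 0) = (if s e' = z then 1 else 0) := by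
        rw [hrel]
      omega

lemma exists_stuck (S : Finset E) :
    ∀ (fuel : ℕ) (l : List E), l ≠ [] → l.Nodup → (∀ e ∈ l, e ∈ S) →
      l.Chain' (ERel s t) → S.card ≤ l.length + fuel →
    ∃ l', l' ≠ [] ∧ l'.Nodup ∧ (∀ e ∈ l', e ∈ S) ∧ l'.Chain' (ERel s t) ∧
      l'.head? = l.head? ∧
      ∀ e ∈ S, e ∉ l' → ∀ y, l'.getLast? = some y → s e ≠ t y := by
  intro fuel
  induction fuel with
  | zero =>
    intro l hne hnd hsub hch hcard
    by_cases hex : ∃ e, e ∈ S ∧ e ∉ l ∧ ∃ y, l.getLast? = some y ∧ s e = t y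
    · obtain ⟨e, heS, hel, y, hy, hsy⟩ := hex
      exfalso
      have hnd' : (l ++ [e]).Nodup := by
        simp [List.nodup_append, hnd, hel]
        exact fun a ha hae => hel (hae ▸ ha)
      have hsub' : (l ++ [e]).toFinset ⊆ S := by
        intro x hx
        simp only [List.toFinset_append, Finset.mem_union, List.mem_toFinset] at hx
        rcases hx with h | h
        · exact hsub _ h
        · simp at h; subst h; exact heS
      have hlen : (l ++ [e]).toFinset.card = l.length + 1 := by
        rw [List.toFinset_card_of_nodup hnd', List.length_append]
        simp
      have := Finset.card_le_card hsub'
      omega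
    · push_neg at hex
      exact ⟨l, hne, hnd, hsub, hch, rfl, fun e heS hel y hy => hex e heS hel y hy⟩
  | succ fuel ih =>
    intro l hne hnd hsub hch hcard
    by_cases hex : ∃ e, e ∈ S ∧ e ∉ l ∧ ∃ y, l.getLast? = some y ∧ s e = t y
    · obtain ⟨e, heS, hel, y, hy, hsy⟩ := hex
      obtain ⟨hd, tl, rfl⟩ := List.exists_cons_of_ne_nil hne
      have hnd' : ((hd :: tl) ++ [e]).Nodup := by
        simp only [List.nodup_append, List.nodup_cons] at *
        simp_all [List.disjoint_singleton]
        exact ⟨fun h => hel.1 h.symm, fun a ha hae => hel.2 (hae ▸ ha)⟩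
      have hch' : ((hd :: tl) ++ [e]).Chain' (ERel s t) := by
        unfold List.Chain'
        rw [List.isChain_append]
        refine ⟨hch, List.isChain_singleton _, ?_⟩
        intro x hx y' hy'
        simp only [List.head?_cons, Option.mem_def, Option.some_inj] at hy'
        subst hy'
        rw [Option.mem_def, hy] at hx
        cases hx
        exact hsy.symm
      have := ih ((hd :: tl) ++ [e]) (by simp) hnd'
        (by intro x hx
            rcases List.mem_append.1 hx with h | h
            · exact hsub _ h
            · simp at h; subst h; exact heS)
        hch' (by simp only [List.length_append, List.length_cons] at *; omega)
      obtain ⟨l', h1, h2, h3, h4, h5, h6⟩ := this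
      exact ⟨l', h1, h2, h3, h4, by rw [h5]; rfl, h6⟩
    · push_neg at hex
      exact ⟨l, hne, hnd, hsub, hch, rfl, fun e heS hel y hy => hex e heS hel y hy⟩

lemma count_filter_toFinset (l : List E) (hnd : l.Nodup) (p : E → Prop) [DecidablePred p] :
    (l.toFinset.filter p).card = l.countP (fun e => decide (p e)) := by
  have h1 : (l.filter (fun e => decide (p e))).toFinset = l.toFinset.filter p := by
    ext x
    simp [List.mem_filter]
  rw [← h1, List.toFinset_card_of_nodup (hnd.filter _), List.countP_eq_length_filter]


lemma exists_closed_trail (S : Finset E)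
    (hbal : ∀ v, (S.filter (fun e => s e = v)).card = (S.filter (fun e => t e = v)).card)
    (e₀ : E) (he₀ : e₀ ∈ S) :
    ∃ l : List E, l ≠ [] ∧ l.Nodup ∧ (∀ e ∈ l, e ∈ S) ∧ l.Chain' (ERel s t) ∧
      l.head? = some e₀ ∧ ∀ y, l.getLast? = some y → t y = s e₀ := by
  obtain ⟨l, hne, hnd, hsub, hch, hhead, hstuck⟩ :=
    exists_stuck s t S S.card [e₀] (by simp) (by simp)
      (by simpa using he₀) (List.isChain_singleton _) (by simp)
  simp only [List.head?_cons] at hhead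
  refine ⟨l, hne, hnd, hsub, hch, hhead, ?_⟩
  intro y hy
  by_contra hne'
  set z := t y with hz
  have hcc := chain_count s t z l hch e₀ y hhead hy
  rw [if_neg (fun h => hne' h.symm), if_pos rfl] at hcc
  -- now: countT l = countS l + 1
  have claim1 : S.filter (fun e => s e = z) ⊆ l.toFinset.filter (fun e => s e = z) := by
    intro e he
    rw [Finset.mem_filter] at he
    rw [Finset.mem_filter, List.mem_toFinset]
    refine ⟨?_, he.2⟩
    by_contra hel
    exact hstuck e he.1 hel y hy (by rw [he.2])
  have claim2 : l.toFinset.filter (fun e => t e = z) ⊆ S.filter (fun e => t e = z) := by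
    intro e he
    rw [Finset.mem_filter, List.mem_toFinset] at he
    exact Finset.mem_filter.2 ⟨hsub _ he.1, he.2⟩
  have c1 := Finset.card_le_card claim1
  have c2 := Finset.card_le_card claim2
  rw [count_filter_toFinset l hnd] at c1 c2
  have := hbal z
  omega

/-- along a chained path from an edge in CS to an edge not in CS there is a transition. -/
lemma exists_transition (CS : Finset E) :
    ∀ (p : List E), p.Chain' (ERel s t) →
      ∀ x y, p.head? = some x → p.getLast? = some y → x ∈ CS → y ∉ CS →
      ∃ g, g ∈ CS ∧ ∃ g', g' ∉ CS ∧ t g = s g' := by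
  intro p
  induction p with
  | nil => intro _ x y hx; simp at hx
  | cons e r ih =>
    intro hch x y hx hy hxC hyC
    simp only [List.head?_cons, Option.some_inj] at hx; subst hx
    cases r with
    | nil =>
      simp only [List.getLast?_singleton, Option.some_inj] at hy; subst hy
      exact absurd hxC hyC
    | cons e' r' =>
      have hrel : t e = s e' := (List.isChain_cons_cons.1 hch).1
      have hch' := (List.isChain_cons_cons.1 hch).2
      rw [List.getLast?_cons_cons] at hy
      by_cases he' : e' ∈ CS
      · exact ih hch' e' y rfl hy he' hyC
      · exact ⟨e, hxC, e', he', hrel⟩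
lemma splice (P Q D : List E) (x : E)
    (hCnd : (P ++ x :: Q).Nodup) (hCch : (P ++ x :: Q).Chain' (ERel s t))
    (hCclosed : ∀ gl gh, (P ++ x :: Q).getLast? = some gl → (P ++ x :: Q).head? = some gh →
      t gl = s gh)
    (hDne : D ≠ []) (hDnd : D.Nodup) (hDch : D.Chain' (ERel s t))
    (hDhead : ∀ z, D.head? = some z → s z = t x)
    (hDlast : ∀ z, D.getLast? = some z → t z = t x)
    (hdisj : ∀ e ∈ D, e ∉ (P ++ x :: Q)) :
    ∃ C' : List E, C'.Nodup ∧ C'.Chain' (ERel s t) ∧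
      (∀ gl gh, C'.getLast? = some gl → C'.head? = some gh → t gl = s gh) ∧
      C' ≠ [] ∧ C'.length = (P ++ x :: Q).length + D.length := by
  set C := P ++ x :: Q with hC
  refine ⟨P ++ x :: (D ++ Q), ?_, ?_, ?_, by simp, ?_⟩
  case _ => -- Nodup
    have hperm : (P ++ x :: (D ++ Q)) ~ C ++ D := by
      rw [hC]
      calc P ++ x :: (D ++ Q) ~ P ++ x :: (Q ++ D) := by
            exact List.Perm.append_left P (List.Perm.cons x (List.perm_append_comm))
        _ = (P ++ x :: Q) ++ D := by simp
    refine (List.Perm.nodup_iff hperm).2 ?_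
    rw [List.nodup_append]
    exact ⟨hCnd, hDnd, fun e heC e' heD hee => hdisj e' heD (hee ▸ heC)⟩
  case _ => -- Chain'
    unfold List.Chain' at hCch ⊢
    rw [List.isChain_append] at hCch ⊢
    obtain ⟨hP, hxQ, hjunc⟩ := hCch
    rw [List.isChain_cons] at hxQ
    obtain ⟨hxq, hQ⟩ := hxQ
    refine ⟨hP, ?_, ?_⟩
    · rw [List.isChain_cons]
      constructor
      · intro b hb
        rw [List.head?_append_of_ne_nil D hDne] at hb
        exact (hDhead b hb).symm
      · rw [List.isChain_append]
        refine ⟨hDch, hQ, ?_⟩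
        intro a ha b hb
        have : t a = t x := hDlast a ha
        rw [ERel, this]
        exact hxq b hb
    · intro a ha b hb
      simp only [List.head?_cons, Option.mem_def, Option.some_inj] at hb
      subst hb
      exact hjunc a ha x (by simp)
  case _ => -- closed
    intro gl gh hgl hgh
    have hhead : (P ++ x :: (D ++ Q)).head? = C.head? := by
      cases P with
      | nil => rw [hC]; rfl
      | cons p P' => rfl
    rw [hhead] at hgh
    cases Q with
    | nil =>
      have h1 : (P ++ x :: (D ++ [])).getLast? = D.getLast? := by
        rw [show P ++ x :: (D ++ []) = (P ++ [x]) ++ D by simp,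
          List.getLast?_append_of_ne_nil _ hDne]
      rw [h1] at hgl
      have h2 : C.getLast? = some x := by
        rw [hC, List.getLast?_append_cons]
        rfl
      have := hCclosed x gh h2 hgh
      rw [hDlast gl hgl, this]
    | cons q Q' =>
      have h1 : (P ++ x :: (D ++ q :: Q')).getLast? = (q :: Q').getLast? := by
        rw [show P ++ x :: (D ++ q :: Q') = (P ++ x :: D) ++ q :: Q' by simp,
          List.getLast?_append_of_ne_nil _ (by simp)]
      have h2 : C.getLast? = (q :: Q').getLast? := by
        rw [hC, show P ++ x :: q :: Q' = (P ++ [x]) ++ q :: Q' by simp,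
          List.getLast?_append_of_ne_nil _ (by simp)]
      exact hCclosed gl gh (by rw [h2, ← h1, hgl]) hgh
  case _ => -- length
    rw [hC]
    simp
    omega
theorem euler_circuit [Fintype E] (hne : Nonempty E)
    (hbal : ∀ v, ((univ : Finset E).filter (fun e => s e = v)).card
      = ((univ : Finset E).filter (fun e => t e = v)).card)
    (hconn : ∀ e f : E, ∃ p : List E, p.Chain' (ERel s t) ∧ p.head? = some e
      ∧ p.getLast? = some f) :
    ∃ C : List E, C.Nodup ∧ C.Chain' (ERel s t) ∧ C ≠ [] ∧
      (∀ gl gh, C.getLast? = some gl → C.head? = some gh → t gl = s gh) ∧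
      ∀ e : E, e ∈ C := by
  classical
  set good : ℕ → Prop := fun m => ∃ l : List E, l ≠ [] ∧ l.Nodup ∧ l.Chain' (ERel s t) ∧
    (∀ gl gh, l.getLast? = some gl → l.head? = some gh → t gl = s gh) ∧ l.length = m with hgood_def
  obtain ⟨e₀⟩ := hne
  obtain ⟨l₀, h0ne, h0nd, _, h0ch, h0head, h0last⟩ :=
    exists_closed_trail s t univ hbal e₀ (mem_univ _)
  have hl₀good : good l₀.length := by
    refine ⟨l₀, h0ne, h0nd, h0ch, ?_, rfl⟩
    intro gl gh hgl hgh
    rw [h0head] at hgh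
    cases hgh
    exact h0last gl hgl
  have hl₀le : l₀.length ≤ Fintype.card E := h0nd.length_le_card
  have hgood : good (Nat.findGreatest good (Fintype.card E)) :=
    Nat.findGreatest_spec hl₀le hl₀good
  obtain ⟨C, hCne, hCnd, hCch, hCclosed, hClen⟩ := hgood
  refine ⟨C, hCnd, hCch, hCne, hCclosed, ?_⟩
  by_contra hnotall
  push_neg at hnotall
  obtain ⟨f, hf⟩ := hnotall
  -- head of C
  obtain ⟨e, hehead⟩ : ∃ e, C.head? = some e := by
    cases C with
    | nil => exact absurd rfl hCne
    | cons a l => exact ⟨a, rfl⟩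
  have heC : e ∈ C := List.mem_of_mem_head? hehead
  -- find transition
  obtain ⟨p, hpch, hphead, hplast⟩ := hconn e f
  obtain ⟨x, hxC, y, hyC, htxsy⟩ := exists_transition s t C.toFinset p hpch e f hphead hplast
    (List.mem_toFinset.2 heC) (fun h => hf (List.mem_toFinset.1 h))
  rw [List.mem_toFinset] at hxC
  -- the unused edge set
  set U : Finset E := univ \ C.toFinset with hU
  have hyU : y ∈ U := by
    rw [hU, Finset.mem_sdiff]
    exact ⟨mem_univ _, hyC⟩
  -- C is balanced
  obtain ⟨lst, hlst⟩ : ∃ z, C.getLast? = some z := by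
    cases hC : C.getLast? with
    | none => exact absurd (List.getLast?_eq_none_iff.1 hC) hCne
    | some z => exact ⟨z, rfl⟩
  have hCbal : ∀ v, (C.toFinset.filter (fun e => s e = v)).card
      = (C.toFinset.filter (fun e => t e = v)).card := by
    intro v
    have hcc := chain_count s t v C hCch e lst hehead hlst
    have : t lst = s e := hCclosed lst e hlst hehead
    rw [this] at hcc
    rw [count_filter_toFinset C hCnd, count_filter_toFinset C hCnd]
    omega
  have hUbal : ∀ v, (U.filter (fun e => s e = v)).card = (U.filter (fun e => t e = v)).card := by
    intro v
    have h1 : ∀ (q : E → Prop) (_ : DecidablePred q),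
        (U.filter q).card = ((univ : Finset E).filter q).card - (C.toFinset.filter q).card := by
      intro q hq
      have : U.filter q = (univ : Finset E).filter q \ C.toFinset.filter q := by
        ext w
        simp only [hU, Finset.mem_filter, Finset.mem_sdiff, mem_univ, true_and]
        tauto
      rw [this, Finset.card_sdiff_of_subset (Finset.filter_subset_filter _ (Finset.subset_univ _))]
    rw [h1 _ inferInstance, h1 _ inferInstance, hbal v, hCbal v]
  -- closed trail in U from y
  obtain ⟨D, hDne, hDnd, hDsub, hDch, hDhead, hDlast⟩ := exists_closed_trail s t U hUbal y hyU
  -- split C at x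
  obtain ⟨P, Q, hPQ⟩ := List.append_of_mem hxC
  rw [hPQ] at hCnd hCch hCclosed
  obtain ⟨C', hC'nd, hC'ch, hC'closed, hC'ne, hC'len⟩ :=
    splice s t P Q D x hCnd hCch hCclosed hDne hDnd hDch
      (fun z hz => by rw [hDhead] at hz; cases hz; rw [htxsy])
      (fun z hz => by rw [hDlast z hz, htxsy])
      (fun e' he' hin => by
        have := hDsub e' he'
        rw [hU, Finset.mem_sdiff, List.mem_toFinset] at this
        exact this.2 (hPQ ▸ hin))
  have hC'good : good C'.length := ⟨C', hC'ne, hC'nd, hC'ch, hC'closed, rfl⟩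
  have hgt : Nat.findGreatest good (Fintype.card E) < C'.length := by
    have hDlen : 0 < D.length := List.length_pos_iff.2 hDne
    rw [hC'len, ← hPQ, hClen]
    omega
  exact Nat.findGreatest_is_greatest hgt hC'nd.length_le_card hC'good
end Euler

section Graph

variable (a d M : ℕ)

abbrev GE := ZMod M × (Fin d → Fin a)
abbrev GV := ZMod M × (Fin (d-1) → Fin a)

variable {a d M}

def gs (hd : 0 < d) (e : GE a d M) : GV a d M :=
  (e.1, fun i => e.2 ⟨i, by omega⟩)

def gt (hd : 0 < d) (e : GE a d M) : GV a d M :=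
  (e.1 + 1, fun i => e.2 ⟨i + 1, by have := i.2; omega⟩)


lemma gbal [NeZero M] (hd : 0 < d) (ha : 0 < a) (v : GV a d M) :
    ((univ : Finset (GE a d M)).filter (fun e => gs hd e = v)).card
      = ((univ : Finset (GE a d M)).filter (fun e => gt hd e = v)).card := by
  have hout : ((univ : Finset (GE a d M)).filter (fun e => gs hd e = v)).card
      = (univ : Finset (Fin a)).card := by
    refine Finset.card_bij' (fun e _ => e.2 ⟨d-1, by omega⟩)
      (fun c _ => (v.1, fun jj : Fin d => if h : (jj : ℕ) < d - 1 then v.2 ⟨jj, h⟩ else c))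
      (fun e he => mem_univ _) ?_ ?_ ?_
    · intro c hc
      simp only [Finset.mem_filter, mem_univ, true_and]
      refine Prod.ext rfl ?_
      funext i
      show (fun jj : Fin d => if h : (jj : ℕ) < d - 1 then v.2 ⟨jj, h⟩ else c) ⟨i, by omega⟩ = v.2 i
      simp only
      rw [dif_pos (by exact i.2)]
    · intro e he
      simp only [Finset.mem_filter, mem_univ, true_and] at he
      have h1 : e.1 = v.1 := congrArg Prod.fst he
      have h2 : (fun i : Fin (d-1) => e.2 ⟨i, by omega⟩) = v.2 := congrArg Prod.snd he
      refine Prod.ext h1.symm ?_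
      funext jj
      simp only
      by_cases hjj : (jj : ℕ) < d - 1
      · rw [dif_pos hjj, ← h2]
      · rw [dif_neg hjj]
        have hje : jj = ⟨d-1, by omega⟩ := by
          refine Fin.ext ?_
          show (jj : ℕ) = d - 1
          have := jj.2
          omega
        rw [hje]
    · intro c hc
      simp only
      rw [dif_neg (by omega)]
  have hin : ((univ : Finset (GE a d M)).filter (fun e => gt hd e = v)).card
      = (univ : Finset (Fin a)).card := by
    refine Finset.card_bij' (fun e _ => e.2 ⟨0, by omega⟩)
      (fun c _ => (v.1 - 1, fun jj : Fin d =>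
        if h : (jj : ℕ) = 0 then c else v.2 ⟨(jj : ℕ) - 1, by have := jj.2; omega⟩))
      (fun e he => mem_univ _) ?_ ?_ ?_
    · intro c hc
      simp only [Finset.mem_filter, mem_univ, true_and]
      refine Prod.ext (by show (v.1 - 1) + 1 = v.1; rw [sub_add_cancel]) ?_
      funext i
      show (fun jj : Fin d => if h : (jj : ℕ) = 0 then c
        else v.2 ⟨(jj : ℕ) - 1, by have := jj.2; omega⟩) ⟨(i : ℕ) + 1, by have := i.2; omega⟩
        = v.2 i
      simp only
      rw [dif_neg (by omega)]
      have hie : (⟨(i : ℕ) + 1 - 1, by have := i.2; omega⟩ : Fin (d-1)) = i := by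
        refine Fin.ext ?_
        show (i : ℕ) + 1 - 1 = (i : ℕ)
        omega
      rw [hie]

    · intro e he
      simp only [Finset.mem_filter, mem_univ, true_and] at he
      have h1 : e.1 + 1 = v.1 := congrArg Prod.fst he
      have h2 : (fun i : Fin (d-1) => e.2 ⟨(i : ℕ) + 1, by have := i.2; omega⟩) = v.2 :=
        congrArg Prod.snd he
      refine Prod.ext (by rw [← h1]; ring) ?_
      funext jj
      show (if h : (jj : ℕ) = 0 then e.2 ⟨0, by omega⟩
        else v.2 ⟨(jj : ℕ) - 1, by have := jj.2; omega⟩) = e.2 jj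
      by_cases hjj : (jj : ℕ) = 0
      · rw [dif_pos hjj]
        have hje : (⟨0, by omega⟩ : Fin d) = jj := by
          refine Fin.ext ?_
          show (0:ℕ) = (jj:ℕ)
          omega
        rw [hje]
      · rw [dif_neg hjj]
        have hje : jj = ⟨((jj:ℕ) - 1) + 1, by have := jj.2; omega⟩ := by
          refine Fin.ext ?_
          show (jj : ℕ) = ((jj:ℕ) - 1) + 1
          omega
        conv_rhs => rw [hje]
        exact congrFun h2.symm ⟨(jj:ℕ) - 1, by have := jj.2; omega⟩
    · intro c hc
      simp
  rw [hout, hin]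

lemma gconn [NeZero M] (hd : 0 < d) (ha : 0 < a) (e f : GE a d M) :
    ∃ p : List (GE a d M), p.Chain' (ERel (gs hd) (gt hd)) ∧ p.head? = some e
      ∧ p.getLast? = some f := by
  set T : ℕ := d + (f.1 - e.1 - (d : ZMod M)).val with hT
  set c : ℕ → Fin a := fun p =>
    if h : p < d then e.2 ⟨p, h⟩ else if h2 : p - T < d then f.2 ⟨p - T, h2⟩ else ⟨0, ha⟩
    with hc
  set G : ℕ → GE a d M := fun i => (e.1 + i, fun j => c (i + j)) with hG
  refine ⟨(List.range (T+1)).map G, ?_, ?_, ?_⟩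
  · unfold List.Chain'
    rw [List.isChain_map, List.isChain_range_succ]
    intro m hm
    unfold ERel
    refine Prod.ext ?_ ?_
    · show (e.1 + m) + 1 = e.1 + (m+1 : ℕ)
      push_cast
      ring
    · funext i
      show c (m + ((i:ℕ)+1)) = c ((m+1) + (i:ℕ))
      congr 1
      omega
  · rw [List.head?_map]
    have : (List.range (T+1)).head? = some 0 := by
      rw [List.range_succ_eq_map]
      rfl
    rw [this]
    simp only [Option.map_some]
    congr 1
    refine Prod.ext (by show e.1 + (0:ℕ) = e.1; push_cast; ring) ?_
    funext j
    show c (0 + (j:ℕ)) = e.2 j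
    rw [hc]
    simp only [zero_add]
    rw [dif_pos j.2]
  · rw [List.getLast?_map]
    have : (List.range (T+1)).getLast? = some T := by
      rw [List.range_succ, List.getLast?_concat]
    rw [this]
    simp only [Option.map_some]
    congr 1
    refine Prod.ext ?_ ?_
    · show e.1 + (T:ℕ) = f.1
      rw [hT]
      push_cast
      rw [ZMod.natCast_val, ZMod.cast_id]
      ring
    · funext j
      show c (T + (j:ℕ)) = f.2 j
      rw [hc]
      simp only
      rw [dif_neg (by omega), dif_pos (by omega : T + (j:ℕ) - T < d)]
      have hje : (⟨T + (j:ℕ) - T, by omega⟩ : Fin d) = j := by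
        refine Fin.ext ?_
        show T + (j:ℕ) - T = (j:ℕ)
        omega
      rw [hje]
lemma exists_good_h (a d M : ℕ) (ha : 0 < a) (hd : 0 < d) (hM : 0 < M) :
    ∃ h : ℕ → Fin a, (∀ m, h (m + M * a ^ d) = h m) ∧
      ∀ s k k', k < a ^ d → k' < a ^ d →
        (∀ i, i < d → h (s + k * M + i) = h (s + k' * M + i)) → k = k' := by
  haveI : NeZero M := ⟨hM.ne'⟩
  obtain ⟨C, hCnd, hCch, hCne, hCclosed, hCall⟩ :=
    euler_circuit (E := GE a d M) (V := GV a d M) (gs hd) (gt hd) ⟨(0, fun _ => ⟨0, ha⟩)⟩ (gbal hd ha) (gconn hd ha)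
  have hlenpos : 0 < C.length := List.length_pos_iff.2 hCne
  have hlen : C.length = M * a ^ d := by
    have h1 : C.toFinset = (univ : Finset (GE a d M)) := by
      ext e; simp [hCall e]
    have h2 := List.toFinset_card_of_nodup hCnd
    rw [h1, Finset.card_univ] at h2
    rw [← h2, Fintype.card_prod, ZMod.card, Fintype.card_fun, Fintype.card_fin, Fintype.card_fin]
  set ed : ℕ → GE a d M := fun x => C.get ⟨x % C.length, Nat.mod_lt x hlenpos⟩ with hed
  have hmodstep : ∀ x : ℕ, (x + 1) % C.length = (x % C.length + 1) % C.length := by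
    intro x
    conv_lhs => rw [← Nat.mod_add_div x C.length]
    rw [show x % C.length + C.length * (x / C.length) + 1
      = (x % C.length + 1) + C.length * (x / C.length) by ring]
    exact Nat.add_mul_mod_self_left _ _ _
  have hstep : ∀ x : ℕ, gt hd (ed x) = gs hd (ed (x + 1)) := by
    intro x
    by_cases hcase : x % C.length + 1 < C.length
    · have hidx : (x+1) % C.length = x % C.length + 1 := by
        rw [hmodstep x, Nat.mod_eq_of_lt hcase]
      have hrel := List.isChain_iff_getElem.1 hCch (x % C.length) (by omega)
      unfold ERel at hrel
      have hEd : ed (x+1) = C.get ⟨x % C.length + 1, by omega⟩ := by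
        rw [hed]
        simp only
        congr 1
        exact Fin.ext hidx
      show gt hd (ed x) = gs hd (ed (x+1))
      rw [hEd]
      exact hrel
    · have hx : x % C.length + 1 = C.length := by
        have := Nat.mod_lt x hlenpos
        omega
      have hidx : (x+1) % C.length = 0 := by
        rw [hmodstep x, hx, Nat.mod_self]
      have hlast : C.getLast? = some (C.get ⟨x % C.length, Nat.mod_lt x hlenpos⟩) := by
        rw [List.getLast?_eq_getLast_of_ne_nil hCne]
        congr 1
        rw [List.getLast_eq_getElem, List.get_eq_getElem]
        congr 1
        show C.length - 1 = x % C.length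
        omega
      have hhead : C.head? = some (C.get ⟨(x+1) % C.length, Nat.mod_lt _ hlenpos⟩) := by
        rw [List.head?_eq_head hCne]
        congr 1
        rw [List.head_eq_getElem_zero hCne, List.get_eq_getElem]
        congr 1
        show 0 = (x+1) % C.length
        omega
      exact hCclosed _ _ hlast hhead
  have ed_fst : ∀ x : ℕ, (ed x).1 = (ed 0).1 + (x : ZMod M) := by
    intro x
    induction x with
    | zero => simp
    | succ m ih =>
      have h1 := congrArg Prod.fst (hstep m)
      have h2 : (ed m).1 + 1 = (ed (m+1)).1 := h1
      rw [← h2, ih]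
      push_cast
      ring
  have ed_snd : ∀ (jv : ℕ) (hj : jv < d) (x : ℕ),
      (ed x).2 ⟨jv, hj⟩ = (ed (x + jv)).2 ⟨0, hd⟩ := by
    intro jv
    induction jv with
    | zero => intro hj x; rfl
    | succ m ih =>
      intro hj x
      have h1 := congrArg Prod.snd (hstep x)
      have h2 : (ed x).2 ⟨m + 1, hj⟩ = (ed (x+1)).2 ⟨m, by omega⟩ :=
        congrFun h1 ⟨m, by omega⟩
      rw [h2, ih (by omega) (x+1)]
      have hxx : x + 1 + m = x + (m + 1) := by omega
      rw [hxx]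
  refine ⟨fun x => (ed x).2 ⟨0, hd⟩, ?_, ?_⟩
  · intro m
    have : (m + M * a ^ d) % C.length = m % C.length := by
      rw [hlen.symm] at *
      exact Nat.add_mod_right m C.length
    simp only [hed, this]
  · intro s k k' hk hk' hw
    have hsnd : (ed (s + k * M)).2 = (ed (s + k' * M)).2 := by
      funext j
      have h1 := ed_snd j.1 j.2 (s + k * M)
      have h2 := ed_snd j.1 j.2 (s + k' * M)
      have h3 := hw j.1 j.2
      rw [show (⟨j.1, j.2⟩ : Fin d) = j from rfl] at h1 h2
      rw [h1, h2]
      exact h3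
    have hfst : (ed (s + k * M)).1 = (ed (s + k' * M)).1 := by
      rw [ed_fst (s + k * M), ed_fst (s + k' * M)]
      push_cast
      rw [ZMod.natCast_self]
      ring
    have hed_eq : ed (s + k * M) = ed (s + k' * M) := Prod.ext hfst hsnd
    have hidx : (s + k * M) % C.length = (s + k' * M) % C.length := by
      have := (hCnd.get_inj_iff).1 hed_eq
      exact congrArg Fin.val this
    have key : ∀ k1 k2 : ℕ, k1 ≤ k2 → k2 < a ^ d →
        (s + k1 * M) % C.length = (s + k2 * M) % C.length → k2 - k1 = 0 := by
      intro k1 k2 hle hk2 hmod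
      have hle2 : s + k1 * M ≤ s + k2 * M :=
        Nat.add_le_add_left (Nat.mul_le_mul_right M hle) s
      have hdvd : C.length ∣ (s + k2 * M) - (s + k1 * M) :=
        (Nat.modEq_iff_dvd' hle2).1 hmod
      have hsub : (s + k2 * M) - (s + k1 * M) = (k2 - k1) * M := by
        have := Nat.sub_mul k2 k1 M
        omega
      rw [hsub, hlen, mul_comm M (a ^ d)] at hdvd
      have hdvd2 : a ^ d ∣ (k2 - k1) := (Nat.mul_dvd_mul_iff_right hM).1 hdvd
      rcases Nat.eq_zero_or_pos (k2 - k1) with h0 | hpos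
      · exact h0
      · have := Nat.le_of_dvd hpos hdvd2
        omega
    rcases le_total k k' with hle | hle
    · have := key k k' hle hk' hidx
      omega
    · have := key k' k hle hk hidx.symm
      omega

end Graph

end UpcycleAux

/-- For every upcycle `u` for `(Fin a)^n`, the graph `S(u)` contains a Hamilton cycle:
a cyclic sequence of length `a ^ n` of words following edges of `S(u)` that visits
each word of `(Fin a)^n` exactly once. -/
theorem sGraph_hamiltonian (a n d : ℕ) (ha : 2 ≤ a) (hn : 0 < n) (hd : d ≤ n)
    (u : ℕ → Option (Fin a))
    (hu : IsUpcycle a n (a ^ (n - d)) u)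
    (hdiam : ∀ i, ((Finset.range n).filter (fun j => u (i + j) = none)).card = d) :
    ∃ f : ℕ → (Fin n → Fin a),
      (∀ i, f (i + a ^ n) = f i) ∧
      (∀ i, SEdge a n u (f i) (f (i + 1))) ∧
      (∀ x : Fin n → Fin a, ∃! i : Fin (a ^ n), f (i : ℕ) = x) := by
  classical
  set N : ℕ := a ^ (n - d) with hNdef
  set p : ℕ → Prop := fun x => u x = none with hpdef
  set M : ℕ := Nat.count p N with hMdef
  have hN : 0 < N := pow_pos (by omega) _
  have haN : a ^ n = a ^ d * N := by
    rw [hNdef, ← pow_add]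
    congr 1
    omega
  -- periodicity of u
  have uper : ∀ (q x : ℕ), u (x + q * N) = u x := by
    intro q
    induction q with
    | zero => intro x; simp
    | succ m ih =>
      intro x
      have : x + (m + 1) * N = (x + m * N) + N := by ring
      rw [this, hu.1, ih]
  -- window count
  have hcnt : ∀ i, Nat.count p (i + n) = Nat.count p i + d := by
    intro i
    rw [Nat.count_add]
    congr 1
    rw [Nat.count_eq_card_filter_range, ← hdiam i]
  -- p is periodic
  have pper : ∀ (q x : ℕ), p (x + q * N) ↔ p x := by
    intro q x
    rw [hpdef]
    simp only
    rw [uper q x]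
  -- count is periodic
  have hcount_per : ∀ x, Nat.count p (x + N) = Nat.count p x + M := by
    intro x
    induction x with
    | zero => simp [hMdef]
    | succ y ih =>
      have h1 : y + 1 + N = (y + N) + 1 := by omega
      rw [h1, Nat.count_succ, ih, Nat.count_succ]
      have h2 : p (y + N) ↔ p y := by
        have := pper 1 y
        rw [one_mul] at this
        exact this
      simp only [h2]
      omega
  have hcount_mul : ∀ (q x : ℕ), Nat.count p (x + q * N) = Nat.count p x + q * M := by
    intro q
    induction q with
    | zero => intro x; simp
    | succ m ih =>
      intro x
      have h1 : x + (m + 1) * N = (x + m * N) + N := by ring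
      rw [h1, hcount_per, ih]
      ring
  -- infinitude of wildcards (given one)
  have hInfOf : ∀ q, p q → (setOf p).Infinite := by
    intro q hq
    apply Set.infinite_of_not_bddAbove
    rintro ⟨B, hB⟩
    have h1 : p (q + (B + 1) * N) := (pper (B+1) q).2 hq
    have h2 : q + (B + 1) * N ≤ B := hB h1
    have h3 : (B + 1) * N ≥ B + 1 := Nat.le_mul_of_pos_right _ hN
    omega
  have hwild : 0 < d → ∃ j < n, p j := by
    intro hd1
    have := hdiam 0
    have hne : ((Finset.range n).filter (fun j => u (0 + j) = none)).Nonempty := by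
      rw [← Finset.card_pos, this]
      omega
    obtain ⟨j, hj⟩ := hne
    rw [Finset.mem_filter, Finset.mem_range] at hj
    exact ⟨j, hj.1, by rw [hpdef]; simpa using hj.2⟩
  have hInfD : 0 < d → (setOf p).Infinite := by
    intro hd1
    obtain ⟨j, _, hj⟩ := hwild hd1
    exact hInfOf j hj
  have hM1 : 0 < d → 0 < M := by
    intro hd1
    obtain ⟨j, _, hj⟩ := hwild hd1
    have hj2 : p (j % N) := by
      have : p (j % N + (j / N) * N) := by
        rw [Nat.mod_add_div']
        exact hj
      exact (pper (j / N) (j % N)).1 this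
    rw [hMdef]
    by_contra h0
    have : Nat.count p N = 0 := by omega
    rw [Nat.count_iff_forall_not] at this
    exact this (j % N) (Nat.mod_lt _ hN) hj2
  -- the filler sequence
  obtain ⟨h, hper, hinj⟩ : ∃ h : ℕ → Fin a, (∀ m, h (m + M * a ^ d) = h m) ∧
      ∀ s k k', k < a ^ d → k' < a ^ d →
        (∀ i, i < d → h (s + k * M + i) = h (s + k' * M + i)) → k = k' := by
    rcases Nat.eq_zero_or_pos d with hd0 | hd1
    · refine ⟨fun _ => ⟨0, by omega⟩, fun m => rfl, ?_⟩
      intro s k k' hk hk' _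
      rw [hd0, pow_zero] at hk hk'
      omega
    · exact exists_good_h a d M (by omega) hd1 (hM1 hd1)
  -- nth facts
  set w : ℕ → ℕ := Nat.nth p with hwdef
  have hwbound : ∀ (i t : ℕ), t < d →
      i ≤ w (Nat.count p i + t) ∧ w (Nat.count p i + t) < i + n := by
    intro i t ht
    have hInf := hInfD (by omega)
    have hc1 : Nat.count p (w (Nat.count p i + t)) = Nat.count p i + t :=
      Nat.count_nth_of_infinite hInf _
    have hpw : p (w (Nat.count p i + t)) := Nat.nth_mem_of_infinite hInf _
    constructor
    · by_contra hlt
      push_neg at hlt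
      have h2 : w (Nat.count p i + t) + 1 ≤ i := by omega
      have h3 := Nat.count_monotone p h2
      rw [Nat.count_succ, if_pos hpw, hc1] at h3
      omega
    · by_contra hge
      push_neg at hge
      have h3 := Nat.count_monotone p hge
      rw [hcnt i, hc1] at h3
      omega
  have hwper : 0 < d → ∀ m, w (m + M) = w m + N := by
    intro hd1 m
    have hInf := hInfD hd1
    have hpw : p (w m) := Nat.nth_mem_of_infinite hInf _
    have hpwN : p (w m + N) := by
      have := pper 1 (w m)
      rw [one_mul] at this
      exact this.2 hpw
    have h1 := Nat.nth_count hpwN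
    have h2 : Nat.count p (w m + N) = m + M := by
      rw [hcount_per, Nat.count_nth_of_infinite hInf]
    rw [h2] at h1
    rw [hwdef]
    exact h1
  -- the total word
  set g : ℕ → Fin a := fun x => (u x).getD (h (Nat.count p x)) with hgdef
  have gsome : ∀ x c, u x = some c → g x = c := by
    intro x c hx
    rw [hgdef]
    simp only [hx, Option.getD_some]
  have gnone : ∀ x, u x = none → g x = h (Nat.count p x) := by
    intro x hx
    rw [hgdef]
    simp only [hx, Option.getD_none]
  have gper : ∀ x, g (x + a ^ n) = g x := by
    intro x
    have hx2 : x + a ^ n = x + a ^ d * N := by rw [haN]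
    have hu2 : u (x + a ^ n) = u x := by
      rw [hx2]
      exact uper (a ^ d) x
    cases hc : u x with
    | some c =>
      rw [gsome x c hc]
      exact gsome _ c (by rw [hu2, hc])
    | none =>
      rw [gnone x hc, gnone _ (by rw [hu2, hc])]
      rw [hx2, hcount_mul, mul_comm (a ^ d) M]
      exact hper _
  -- the candidate Hamilton cycle
  set f : ℕ → (Fin n → Fin a) := fun i => fun j => g (i + (j : ℕ)) with hfdef
  have hcover : ∀ i, Covers a n u i (f i) := by
    intro i j
    cases hc : u (i + (j : ℕ)) with
    | none => exact Or.inl rfl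
    | some c =>
      right
      simp only [hfdef]
      rw [gsome _ c hc]
  have covers_mod : ∀ (i : ℕ) (x : Fin n → Fin a), Covers a n u i x →
      Covers a n u (i % N) x := by
    intro i x hx j
    have heq : (i % N + (j : ℕ)) + (i / N) * N = i + (j : ℕ) := by
      have := Nat.mod_add_div' i N
      omega
    have hval : u (i % N + (j : ℕ)) = u (i + (j : ℕ)) := by
      rw [← heq, uper]
    rcases hx j with hc | hc
    · exact Or.inl (by rw [hval, hc])
    · exact Or.inr (by rw [hval, hc])
  -- key computation
  have key : ∀ (x : Fin n → Fin a) (i : ℕ) (jv : ℕ) (hjv : jv < n), f i = x →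
      u (i % N + jv) = none →
      h (Nat.count p (i % N + jv) + (i / N) * M) = x ⟨jv, hjv⟩ := by
    intro x i jv hjv hf hnone
    have hij : i + jv = (i % N + jv) + (i / N) * N := by
      have := Nat.mod_add_div' i N
      omega
    have hu2 : u (i + jv) = none := by
      rw [hij, uper]
      exact hnone
    have hgx : g (i + jv) = x ⟨jv, hjv⟩ := congrFun hf ⟨jv, hjv⟩
    rw [gnone _ hu2, hij, hcount_mul] at hgx
    exact hgx
  -- uniqueness
  have uniq : ∀ (x : Fin n → Fin a) (i i' : ℕ), i < a ^ n → i' < a ^ n →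
      f i = x → f i' = x → i = i' := by
    intro x i i' hi hi' hf hf'
    have c1 : Covers a n u (i % N) x := covers_mod i x (by rw [← hf]; exact hcover i)
    have c2 : Covers a n u (i' % N) x := covers_mod i' x (by rw [← hf']; exact hcover i')
    obtain ⟨i₀f, hc₀, huq⟩ := hu.2 x
    have e1 : (⟨i % N, Nat.mod_lt _ hN⟩ : Fin N) = i₀f := huq _ c1
    have e2 : (⟨i' % N, Nat.mod_lt _ hN⟩ : Fin N) = i₀f := huq _ c2
    have emod : i % N = i' % N := by
      have := e1.trans e2.symm
      exact congrArg Fin.val this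
    have hk : i / N < a ^ d := by
      rw [Nat.div_lt_iff_lt_mul hN]
      rw [haN] at hi
      omega
    have hk' : i' / N < a ^ d := by
      rw [Nat.div_lt_iff_lt_mul hN]
      rw [haN] at hi'
      omega
    have hdiv : i / N = i' / N := by
      apply hinj (Nat.count p (i % N)) (i / N) (i' / N) hk hk'
      intro t ht
      have hInf := hInfD (by omega)
      obtain ⟨hq1, hq2⟩ := hwbound (i % N) t ht
      set s := Nat.count p (i % N) with hsdef
      set q := w (s + t) with hqdef
      have hpq : p q := Nat.nth_mem_of_infinite hInf _
      have hcq : Nat.count p q = s + t := Nat.count_nth_of_infinite hInf _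
      set jv : ℕ := q - i % N with hjv
      have hjvn : jv < n := by omega
      have hqe : i % N + jv = q := by omega
      have hnone : u (i % N + jv) = none := by
        rw [hqe]
        exact hpq
      have k1 := key x i jv hjvn hf hnone
      have k2 := key x i' jv hjvn hf' (by rw [← emod]; exact hnone)
      rw [← emod] at k2
      rw [hqe, hcq] at k1 k2
      rw [show s + i / N * M + t = s + t + i / N * M from by ring,
        show s + i' / N * M + t = s + t + i' / N * M from by ring, k1, k2]
    have d1 := Nat.mod_add_div' i N
    have d2 := Nat.mod_add_div' i' N
    rw [← d1, ← d2, emod, hdiv]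
  -- existence
  have exist : ∀ x : Fin n → Fin a, ∃ i : ℕ, i < a ^ n ∧ f i = x := by
    intro x
    obtain ⟨i₀f, hc₀, _⟩ := hu.2 x
    set i₀ : ℕ := (i₀f : ℕ) with hi₀def
    have hi₀ : i₀ < N := i₀f.2
    set s := Nat.count p i₀ with hsdef
    set φ : Fin (a ^ d) → (Fin d → Fin a) :=
      fun k t => h (s + (k : ℕ) * M + (t : ℕ)) with hφdef
    have hφinj : Function.Injective φ := by
      intro k k' he
      refine Fin.ext (hinj s k k' k.2 k'.2 ?_)
      intro t ht
      exact congrFun he ⟨t, ht⟩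
    have hφsurj : Function.Surjective φ := by
      have hbij := (Fintype.bijective_iff_injective_and_card φ).2
        ⟨hφinj, by simp [Fintype.card_fun]⟩
      exact hbij.2
    have hvb : ∀ t : ℕ, t < d → i₀ ≤ w (s + t) ∧ w (s + t) < i₀ + n := fun t ht =>
      hwbound i₀ t ht
    set v : Fin d → Fin a := fun t =>
      x ⟨w (s + (t : ℕ)) - i₀, by have := hvb (t : ℕ) t.2; omega⟩ with hvdef
    obtain ⟨k, hkv⟩ := hφsurj v
    refine ⟨i₀ + (k : ℕ) * N, ?_, ?_⟩
    · rw [haN]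
      calc i₀ + (k : ℕ) * N < ((k : ℕ) + 1) * N := by rw [add_one_mul]; omega
        _ ≤ a ^ d * N := Nat.mul_le_mul_right N (by have := k.2; omega)
    · funext j
      have hidx : i₀ + (k : ℕ) * N + (j : ℕ) = (i₀ + (j : ℕ)) + (k : ℕ) * N := by ring
      cases hc : u (i₀ + (j : ℕ)) with
      | some c =>
        have hu2 : u (i₀ + (k : ℕ) * N + (j : ℕ)) = some c := by
          rw [hidx, uper]
          exact hc
        rw [hfdef]
        simp only
        rw [gsome _ c hu2]
        rcases hc₀ j with hcc | hcc
        · rw [hc] at hcc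
          cases hcc
        · rw [hc] at hcc
          exact Option.some_inj.1 hcc
      | none =>
        set q := i₀ + (j : ℕ) with hqdef
        have hpq : p q := hc
        have hInf := hInfOf q hpq
        have hcts : s ≤ Nat.count p q := Nat.count_monotone p (by omega)
        have hctq : Nat.count p (q + 1) = Nat.count p q + 1 := by
          rw [Nat.count_succ, if_pos hpq]
        have hctub : Nat.count p (q + 1) ≤ s + d := by
          rw [hsdef, ← hcnt i₀]
          exact Nat.count_monotone p (by have := j.2; omega)
        set t : ℕ := Nat.count p q - s with htdef
        have ht : t < d := by omega
        have hwq : w (s + t) = q := by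
          have h1 : s + t = Nat.count p q := by omega
          rw [h1, hwdef]
          exact Nat.nth_count hpq
        have hu2 : u (i₀ + (k : ℕ) * N + (j : ℕ)) = none := by
          rw [hidx, uper]
          exact hc
        rw [hfdef]
        simp only
        rw [gnone _ hu2]
        have hcc : Nat.count p (i₀ + (k : ℕ) * N + (j : ℕ)) = Nat.count p q + (k : ℕ) * M := by
          rw [hidx, hcount_mul]
        rw [hcc]
        have r1 : Nat.count p q + (k : ℕ) * M = s + (k : ℕ) * M + t := by omega
        rw [r1]
        have hval : h (s + (k : ℕ) * M + t)
            = x ⟨w (s + t) - i₀, by have := hvb t ht; omega⟩ := congrFun hkv ⟨t, ht⟩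
        rw [hval]
        have hje : (⟨w (s + t) - i₀, by have := hvb t ht; omega⟩ : Fin n) = j := by
          refine Fin.ext ?_
          show w (s + t) - i₀ = (j : ℕ)
          rw [hwq]
          omega
        rw [hje]
  refine ⟨f, ?_, ?_, ?_⟩
  · intro i
    funext j
    show g (i + a ^ n + (j : ℕ)) = g (i + (j : ℕ))
    have : i + a ^ n + (j : ℕ) = (i + (j : ℕ)) + a ^ n := by ring
    rw [this, gper]
  · intro i
    constructor
    · intro idx hlt
      show g (i + 1 + idx) = g (i + (idx + 1))
      congr 1
      ring
    · exact ⟨i, hcover i, hcover (i + 1)⟩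
  · intro x
    obtain ⟨i, hi, hfi⟩ := exist x
    refine ⟨⟨i, hi⟩, hfi, ?_⟩
    intro y hy
    refine Fin.ext ?_
    exact uniq x (y : ℕ) i y.2 hi hy hfi
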